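/- The union α' of all pencils in the equivalence class of a pencil α is a pencil, is strictly complete, and is equivalent to α. Moreover, if the class contains a regular pencil ρ, then α' = ρ. -/
import Mathlib


/-- An incidence plane: points, lines, and an incidence relation. -/
structure IncidencePlane where
  Point : Type
  Line : Type
  mem : Point → Line → Prop

namespace IncidencePlane

variable (G : IncidencePlane)

/-- Lines `l` and `m` intersect: they are distinct and have a common point. -/
def Intersect (l m : G.Line) : Prop := l ≠ m ∧ ∃ Q, G.mem Q l ∧ G.mem Q m

/-- Parallel is the negation of intersecting. -/
def Par (l m : G.Line) : Prop := ¬ G.Intersect l m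

/-- The point set of a line. -/
def lineSet (l : G.Line) : Set G.Point := {Q | G.mem Q l}

/-- The pencil of all lines through a point `Q`, written `Q*`. -/
def pointPencil (Q : G.Point) : Set G.Line := {l | G.mem Q l}

/-- The pencil of all lines parallel to `l`, written `l*`. -/
def parPencil (l : G.Line) : Set G.Line := {m | G.Par m l}

/-- A regular pencil has the form `Q*` or `l*`. -/
def Regular (ρ : Set G.Line) : Prop :=
  (∃ Q, ρ = G.pointPencil Q) ∨ (∃ l, ρ = G.parPencil l)

/-- A pencil: (1) it cannot contain fewer than two lines; (2) two distinct
lines of it lying in a regular pencil `ρ` force inclusion in `ρ`. -/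
def IsPencil (α : Set G.Line) : Prop :=
  (¬ ∀ l ∈ α, ∀ m ∈ α, l = m) ∧
  (∀ ρ : Set G.Line, G.Regular ρ → ∀ l ∈ α, ∀ m ∈ α, l ≠ m → l ∈ ρ → m ∈ ρ → α ⊆ ρ)

/-- A complete pencil: two distinct lines of it in a regular pencil `ρ` force equality with `ρ`. -/
def Complete (α : Set G.Line) : Prop :=
  ∀ ρ : Set G.Line, G.Regular ρ → ∀ l ∈ α, ∀ m ∈ α, l ≠ m → l ∈ ρ → m ∈ ρ → α = ρ

/-- A strictly complete pencil: contained in a regular pencil implies equal to it. -/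
def StrictlyComplete (α : Set G.Line) : Prop :=
  ∀ ρ : Set G.Line, G.Regular ρ → α ⊆ ρ → α = ρ

/-- `l` lies outside the family `α`: it differs from every line of `α`. -/
def LineOutside (l : G.Line) (α : Set G.Line) : Prop := ∀ m ∈ α, l ≠ m

/-- Pencils `α` and `β` are distinct: some line of one lies outside the other. -/
def PDistinct (α β : Set G.Line) : Prop :=
  (∃ l ∈ α, G.LineOutside l β) ∨ (∃ l ∈ β, G.LineOutside l α)

/-- Pencils are equivalent when they are contained in exactly the same regular pencils. -/
def PEquiv (α β : Set G.Line) : Prop :=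
  ∀ ρ : Set G.Line, G.Regular ρ → (α ⊆ ρ ↔ β ⊆ ρ)

/-- A parallel pencil: a pencil any two of whose lines are parallel. -/
def ParallelPencil (α : Set G.Line) : Prop :=
  G.IsPencil α ∧ ∀ l ∈ α, ∀ m ∈ α, G.Par l m

/-- Point `Q` lies outside line `l`: it differs from every point of `l`. -/
def PointOutside (Q : G.Point) (l : G.Line) : Prop := ∀ R, G.mem R l → Q ≠ R

/-- The union of all pencils equivalent to `α` (the full pencil `α'`). -/
def fullPencil (α : Set G.Line) : Set G.Line :=
  ⋃₀ {β | G.IsPencil β ∧ G.PEquiv β α}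

/-- The core of two pencils: points lying on a common line of the two pencils. -/
def core (α β : Set G.Line) : Set G.Point :=
  {Q | ∃ l, l ∈ α ∩ β ∧ G.mem Q l}

/-- A virtual line: a set of points which is a line whenever it is inhabited. -/
def VLine (p : Set G.Point) : Prop :=
  p.Nonempty → ∃ l : G.Line, p = G.lineSet l

/-- Distinctness of virtual lines. -/
def VDistinct (p q : Set G.Point) : Prop :=
  ¬ (p = q) ∧ ∀ l m : G.Line, p = G.lineSet l → q = G.lineSet m → l ≠ m

/-- Equivalence of virtual lines: the negation of distinctness. -/
def VEquiv (p q : Set G.Point) : Prop := ¬ G.VDistinct p q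

/-- The union of all virtual lines equivalent to `p`. -/
def vfull (p : Set G.Point) : Set G.Point :=
  ⋃₀ {q | G.VLine q ∧ G.VEquiv q p}

/-- The axioms of an incidence plane used in this paper. -/
structure Axioms (G : IncidencePlane) : Prop where
  join : ∀ Q R : G.Point, Q ≠ R → ∃ l, G.mem Q l ∧ G.mem R l
  join_unique : ∀ Q R : G.Point, Q ≠ R → ∀ l m : G.Line,
      G.mem Q l → G.mem R l → G.mem Q m → G.mem R m → l = m
  cross_unique : ∀ l m : G.Line, l ≠ m → ∀ Q R : G.Point,
      G.mem Q l → G.mem Q m → G.mem R l → G.mem R m → Q = R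
  parPost : ∀ (Q : G.Point) (l : G.Line), ∃ n, G.mem Q n ∧ G.Par n l
  parPost_unique : ∀ (Q : G.Point) (l : G.Line) (n n' : G.Line),
      G.mem Q n → G.Par n l → G.mem Q n' → G.Par n' l → n = n'
  par_int : ∀ n₁ n₂ l m : G.Line,
      G.Par n₁ l → G.Par n₂ m → G.Intersect l m → G.Intersect n₁ n₂
  not_pointOutside : ∀ (Q : G.Point) (l : G.Line), ¬ G.PointOutside Q l → G.mem Q l
  two_points : ∀ l : G.Line, ∃ Q R : G.Point, Q ≠ R ∧ G.mem Q l ∧ G.mem R l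
  exists_intersecting : ∃ l m : G.Line, G.Intersect l m

end IncidencePlane

open IncidencePlane

namespace IncidencePlane

variable {G : IncidencePlane}

lemma intersect_symm {l m : G.Line} (h : G.Intersect l m) : G.Intersect m l :=
  ⟨h.1.symm, h.2.imp fun _ hq => ⟨hq.2, hq.1⟩⟩

lemma par_symm {l m : G.Line} (h : G.Par l m) : G.Par m l :=
  fun hi => h (intersect_symm hi)

lemma par_self (l : G.Line) : G.Par l l := fun hi => hi.1 rfl

lemma two_in_regular {l m : G.Line} (hne : l ≠ m) :
    ∃ σ, G.Regular σ ∧ l ∈ σ ∧ m ∈ σ := by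
  by_cases h : G.Intersect l m
  · obtain ⟨Q, hQl, hQm⟩ := h.2
    exact ⟨G.pointPencil Q, Or.inl ⟨Q, rfl⟩, hQl, hQm⟩
  · exact ⟨G.parPencil l, Or.inr ⟨l, rfl⟩, par_self l, par_symm h⟩

lemma pencil_two {α : Set G.Line} (hα : G.IsPencil α) :
    ∃ l ∈ α, ∃ m ∈ α, l ≠ m := by
  have h := hα.1; push_neg at h; exact h

lemma pencil_sub_regular {α : Set G.Line} (hα : G.IsPencil α) :
    ∃ σ, G.Regular σ ∧ α ⊆ σ := by
  obtain ⟨l, hl, m, hm, hne⟩ := pencil_two hα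
  obtain ⟨σ, hσ, hlσ, hmσ⟩ := two_in_regular hne
  exact ⟨σ, hσ, hα.2 σ hσ l hl m hm hne hlσ hmσ⟩

lemma regular_two (ax : G.Axioms) {ρ : Set G.Line} (hρ : G.Regular ρ) :
    ∃ l ∈ ρ, ∃ m ∈ ρ, l ≠ m := by
  obtain ⟨a, b, hab⟩ := ax.exists_intersecting
  rcases hρ with ⟨Q, rfl⟩ | ⟨l, rfl⟩
  · obtain ⟨n₁, hn₁, hp₁⟩ := ax.parPost Q a
    obtain ⟨n₂, hn₂, hp₂⟩ := ax.parPost Q b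
    exact ⟨n₁, hn₁, n₂, hn₂, (ax.par_int n₁ n₂ a b hp₁ hp₂ hab).1⟩
  · obtain ⟨Q, R, hQR, hQ, hR⟩ := ax.two_points l
    obtain ⟨n₁, hn₁, hp₁⟩ := ax.parPost Q a
    obtain ⟨n₂, hn₂, hp₂⟩ := ax.parPost Q b
    have hint := ax.par_int n₁ n₂ a b hp₁ hp₂ hab
    have hm : ∃ m, m ≠ l ∧ G.mem Q m := by
      by_cases h1 : n₁ = l
      · exact ⟨n₂, by rintro rfl; exact hint.1 h1, hn₂⟩
      · exact ⟨n₁, h1, hn₁⟩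
    obtain ⟨m, hml, hQm⟩ := hm
    obtain ⟨A, B, hAB, hA, hB⟩ := ax.two_points m
    have hS : ∃ S, G.mem S m ∧ ¬ G.mem S l := by
      by_contra h
      push_neg at h
      exact hAB (ax.cross_unique m l hml A B hA (h A hA) hB (h B hB))
    obtain ⟨S, hSm, hSl⟩ := hS
    obtain ⟨n, hSn, hnl⟩ := ax.parPost S l
    refine ⟨l, par_self l, n, hnl, ?_⟩
    rintro rfl
    exact hSl hSn

lemma regular_coincide (ax : G.Axioms) {ρ σ : Set G.Line}
    (hρ : G.Regular ρ) (hσ : G.Regular σ) {l m : G.Line}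
    (hlρ : l ∈ ρ) (hmρ : m ∈ ρ) (hne : l ≠ m) (hlσ : l ∈ σ) (hmσ : m ∈ σ) :
    ρ ⊆ σ := by
  rcases hρ with ⟨Q, rfl⟩ | ⟨a, rfl⟩ <;> rcases hσ with ⟨R, rfl⟩ | ⟨b, rfl⟩
  · by_cases hQR : Q = R
    · subst hQR; exact le_refl _
    · exact absurd (ax.join_unique Q R hQR l m hlρ hlσ hmρ hmσ) hne
  · exact absurd (ax.parPost_unique Q b l m hlρ hlσ hmρ hmσ) hne
  · exact absurd (ax.parPost_unique R a l m hlσ hlρ hmσ hmρ) hne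
  · intro n hn hint
    exact hlρ (ax.par_int l a b n hlσ (par_symm hn) (intersect_symm hint))

lemma regular_isPencil (ax : G.Axioms) {ρ : Set G.Line} (hρ : G.Regular ρ) :
    G.IsPencil ρ := by
  constructor
  · intro h
    obtain ⟨l, hl, m, hm, hne⟩ := regular_two ax hρ
    exact hne (h l hl m hm)
  · intro σ hσ l hl m hm hne hlσ hmσ
    exact regular_coincide ax hρ hσ hl hm hne hlσ hmσ

end IncidencePlane

/-- the union α' of all pencils equivalent to α is a strictly
complete pencil equivalent to α; if the class contains a regular pencil ρ,
then α' = ρ. -/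
theorem fullPencil_strictly_complete (G : IncidencePlane) (ax : G.Axioms)
    (α : Set G.Line) (hα : G.IsPencil α) :
    G.IsPencil (G.fullPencil α) ∧
    G.StrictlyComplete (G.fullPencil α) ∧
    G.PEquiv (G.fullPencil α) α ∧
    (∀ ρ : Set G.Line, G.Regular ρ → G.IsPencil ρ → G.PEquiv ρ α →
      G.fullPencil α = ρ) := by
  have hmemfam : α ∈ {β | G.IsPencil β ∧ G.PEquiv β α} :=
    ⟨hα, fun ρ _ => Iff.rfl⟩
  have hsubA : α ⊆ G.fullPencil α := fun l hl => ⟨α, hmemfam, hl⟩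
  have hAsub : ∀ ρ : Set G.Line, G.Regular ρ → α ⊆ ρ → G.fullPencil α ⊆ ρ := by
    rintro ρ hρ hαρ l ⟨β, ⟨hβp, hβe⟩, hlβ⟩
    exact (hβe ρ hρ).mpr hαρ hlβ
  have hequiv : G.PEquiv (G.fullPencil α) α := by
    intro ρ hρ
    exact ⟨fun h => (hsubA.trans h), fun h => hAsub ρ hρ h⟩
  have hpencil : G.IsPencil (G.fullPencil α) := by
    constructor
    · intro h
      obtain ⟨l, hl, m, hm, hne⟩ := pencil_two hα
      exact hne (h l (hsubA hl) m (hsubA hm))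
    · rintro ρ hρ l ⟨β₁, ⟨hβ₁p, hβ₁e⟩, hlβ₁⟩ m ⟨β₂, ⟨hβ₂p, hβ₂e⟩, hmβ₂⟩ hne hlρ hmρ
      obtain ⟨σ, hσ, hβ₂σ⟩ := pencil_sub_regular hβ₂p
      have hασ : α ⊆ σ := (hβ₂e σ hσ).mp hβ₂σ
      have hβ₁σ : β₁ ⊆ σ := (hβ₁e σ hσ).mpr hασ
      have hσρ : σ ⊆ ρ :=
        regular_coincide ax hσ hρ (hβ₁σ hlβ₁) (hβ₂σ hmβ₂) hne hlρ hmρ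
      exact hAsub ρ hρ (hασ.trans hσρ)
  have hmemρ : ∀ ρ : Set G.Line, G.Regular ρ → G.PEquiv ρ α →
      G.fullPencil α = ρ := by
    intro ρ hρ hρe
    have hρsub : ρ ⊆ G.fullPencil α := fun l hl =>
      ⟨ρ, ⟨regular_isPencil ax hρ, hρe⟩, hl⟩
    have hαρ : α ⊆ ρ := (hρe ρ hρ).mp (subset_refl ρ)
    exact Set.Subset.antisymm (hAsub ρ hρ hαρ) hρsub
  refine ⟨hpencil, ?_, hequiv, fun ρ hρ _ hρe => hmemρ ρ hρ hρe⟩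
  intro ρ hρ hAρ
  have hαρ : α ⊆ ρ := hsubA.trans hAρ
  have hρe : G.PEquiv ρ α := by
    intro σ hσ
    constructor
    · intro h; exact hαρ.trans h
    · intro h
      obtain ⟨l, hl, m, hm, hne⟩ := pencil_two hα
      exact regular_coincide ax hρ hσ (hαρ hl) (hαρ hm) hne (h hl) (h hm)
  exact hmemρ ρ hρ hρe
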